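/- arXiv:2407.14436 — 4 statements merged into one kernel-verified Lean document; each statement's English description precedes it below -/
import Mathlib

section
/- Any player-1 strategy from a state s ∈ Win_2(G, F) that prevents every resulting play in the modified game G_{X,Y} (where states in X ∪ Y are made absorbing sinks) from visiting F must force a visit to X ∪ Y: there is no play starting at s consistent with the players' strategies that remains forever in Win_2(G, F) \ (F ∪ X ∪ Y). -/
open scoped Classical
noncomputable section

variable {S A : Type*}

/-- Player-2 attractor level sets: `Z 0 = F`, `Z (k+1) = Z k ∪ Pre₁(Z k) ∪ Pre₂(Z k)`,
where `Pre₁` collects P1 states all of whose actions lead into `Z k`, and `Pre₂`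
collects P2 states some action of which leads into `Z k`. -/
def lev (isP1 : S → Prop) (T : S → A → S) (F : Set S) : ℕ → Set S
  | 0 => F
  | n + 1 => lev isP1 T F n ∪
      {s | isP1 s ∧ ∀ a, T s a ∈ lev isP1 T F n} ∪
      {s | ¬ isP1 s ∧ ∃ a, T s a ∈ lev isP1 T F n}

/-- Player-2 winning region (attractor of `F` for player 2). -/
def win2 (isP1 : S → Prop) (T : S → A → S) (F : Set S) : Set S :=
  ⋃ n, lev isP1 T F n

/-- Rank of a state: the minimal attractor level containing it (`⊤` if none). -/
def rank (isP1 : S → Prop) (T : S → A → S) (F : Set S) (s : S) : ℕ∞ :=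
  ⨅ (n : ℕ) (_ : s ∈ lev isP1 T F n), (n : ℕ∞)

/-- Transition function of the true game `G_{X,Y}`: states in the decoy set
`D` are absorbing sinks; elsewhere the original transitions apply. -/
def sinkT (T : S → A → S) (D : Set S) (s : S) (a : A) : S :=
  if s ∈ D then s else T s a

lemma rank_le_of_mem {isP1 : S → Prop} {T : S → A → S} {F : Set S} {s : S} {n : ℕ}
    (h : s ∈ lev isP1 T F n) : rank isP1 T F s ≤ n := by
  exact iInf_le_of_le n (iInf_le _ h)

lemma lev_mono {isP1 : S → Prop} {T : S → A → S} {F : Set S} :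
    Monotone (lev isP1 T F) := by
  apply monotone_nat_of_le_succ
  intro n
  intro x hx
  exact Or.inl (Or.inl hx)

lemma lt_rank_of_not_mem {isP1 : S → Prop} {T : S → A → S} {F : Set S} {s : S} {n : ℕ}
    (h : s ∉ lev isP1 T F n) : (n : ℕ∞) < rank isP1 T F s := by
  have h1 : ((n : ℕ∞) + 1) ≤ rank isP1 T F s := by
    rw [rank]
    refine le_iInf fun m => le_iInf fun hm => ?_
    have : n < m := by
      by_contra hle
      push_neg at hle
      exact h (lev_mono hle hm)
    have : n + 1 ≤ m := this
    exact_mod_cast this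
  exact lt_of_lt_of_le (by exact_mod_cast Nat.lt_succ_self n) h1

lemma p1_step {isP1 : S → Prop} {T : S → A → S} {F : Set S} {s : S}
    (hs : s ∈ win2 isP1 T F) (hsF : s ∉ F) (hp1 : isP1 s) (a : A) :
    rank isP1 T F (T s a) < rank isP1 T F s := by
  obtain ⟨_, ⟨n, rfl⟩, hn⟩ := hs
  have hex : ∃ n, s ∈ lev isP1 T F n := ⟨n, hn⟩
  have hmem : s ∈ lev isP1 T F (Nat.find hex) := Nat.find_spec hex
  cases hk : Nat.find hex with
  | zero => rw [hk] at hmem; exact absurd hmem hsF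
  | succ k =>
    have hnot : s ∉ lev isP1 T F k := Nat.find_min hex (by omega)
    rw [hk] at hmem
    simp only [lev] at hmem
    rcases hmem with (h | h) | h
    · exact absurd h hnot
    · calc rank isP1 T F (T s a) ≤ k := rank_le_of_mem (h.2 a)
        _ < rank isP1 T F s := lt_rank_of_not_mem hnot
    · exact absurd hp1 h.1

/-- starting from `s ∈ Win₂(G,F)`, no play of the modified game
`G_{X,Y}` that is consistent with any P1 strategy and a greedy (rank-reducing)
winning strategy of P2 can remain forever in `Win₂(G,F) \ (F ∪ X ∪ Y)`;
hence a P1 strategy avoiding `F` must force a visit to `X ∪ Y`. -/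
theorem must_visit_decoys [Fintype S]
    (isP1 : S → Prop) (T : S → A → S) (F X Y : Set S)
    (hX : X ⊆ win2 isP1 T F \ F) (hY : Y ⊆ win2 isP1 T F \ F)
    (hXY : Disjoint X Y)
    (π₁ π₂ : S → A)
    (hgreedy : ∀ s, ¬ isP1 s → s ∈ win2 isP1 T F → s ∉ F →
      rank isP1 T F (T s (π₂ s)) < rank isP1 T F s)
    (s : S) (hs : s ∈ win2 isP1 T F) :
    ¬ ∀ n, (fun t => sinkT T (X ∪ Y) t (if isP1 t then π₁ t else π₂ t))^[n] s
        ∈ win2 isP1 T F \ (F ∪ X ∪ Y) := by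
  intro h
  set f : S → S := fun t => sinkT T (X ∪ Y) t (if isP1 t then π₁ t else π₂ t) with hf
  -- rank strictly decreases
  have hdec : ∀ n, rank isP1 T F (f^[n+1] s) < rank isP1 T F (f^[n] s) := by
    intro n
    obtain ⟨hw, hnot⟩ := h n
    set t := f^[n] s
    have htF : t ∉ F := fun hh => hnot (Or.inl (Or.inl hh))
    have htD : t ∉ X ∪ Y := by
      intro hh
      rcases hh with hh | hh
      · exact hnot (Or.inl (Or.inr hh))
      · exact hnot (Or.inr hh)
    have hstep : f^[n+1] s = T t (if isP1 t then π₁ t else π₂ t) := by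
      rw [Function.iterate_succ_apply']
      show sinkT T (X ∪ Y) t _ = _
      rw [sinkT, if_neg htD]
    rw [hstep]
    by_cases hp : isP1 t
    · rw [if_pos hp]
      exact p1_step hw htF hp _
    · rw [if_neg hp]
      exact hgreedy t hp hw htF
  -- turn into ℕ-valued strictly decreasing sequence
  have hfin : ∀ n, rank isP1 T F (f^[n] s) ≠ ⊤ := by
    intro n
    obtain ⟨hw, _⟩ := h n
    obtain ⟨_, ⟨m, rfl⟩, hm⟩ := hw
    exact ne_top_of_le_ne_top (by simp) (rank_le_of_mem hm)
  set g : ℕ → ℕ := fun n => (rank isP1 T F (f^[n] s)).toNat with hg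
  have hgdec : ∀ n, g (n+1) < g n := by
    intro n
    have := hdec n
    have h1 := hfin n
    have h2 := hfin (n+1)
    have h3 := this
    rw [← ENat.coe_toNat h1, ← ENat.coe_toNat h2] at h3
    exact_mod_cast h3
  have hbound : ∀ n, g n + n ≤ g 0 := by
    intro n
    induction n with
    | zero => simp
    | succ k ih =>
      have := hgdec k
      omega
  have := hbound (g 0 + 1)
  omega
end
end

section
/- (Fake targets equal traps, almost-sure case) For any Z ⊆ Win_2(G, F) \ F, the deceptive almost-sure winning region with Z as traps equals the one with Z as fake targets: DASWin_1(Z, ∅) = DASWin_1(∅, Z). -/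
open scoped Classical
noncomputable section

variable {S A : Type*}

/-- One step of the hypergame MDP for decoy placement `(X, Y)` under P1's
memoryless strategy `π₁`: at P1 states, `π₁` is followed; at P2 (nature)
states, any subjectively rationalizable action (one whose successor stays in
P2's perceived winning region `Win₂(G, F ∪ Y)`) may occur with positive
probability. Decoys `X ∪ Y` are absorbing. -/
def mdpStep (isP1 : S → Prop) (T : S → A → S) (F X Y : Set S) (π₁ : S → A)
    (t t' : S) : Prop :=
  if isP1 t then t' = sinkT T (X ∪ Y) t (π₁ t)
  else ∃ a, T t a ∈ win2 isP1 T (F ∪ Y) ∧ t' = sinkT T (X ∪ Y) t a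

/-- Player 1's stealthy deceptive almost-sure winning region: states from
which P1 has a memoryless strategy such that from every state reachable in
the hypergame MDP, the decoy set `X ∪ Y` remains reachable (the standard
graph-theoretic characterization of almost-sure reachability in finite
MDPs). -/
def daswin (isP1 : S → Prop) (T : S → A → S) (F X Y : Set S) : Set S :=
  {s | ∃ π₁ : S → A,
    ∀ s', Relation.ReflTransGen (mdpStep isP1 T F X Y π₁) s s' →
      ∃ s'', Relation.ReflTransGen (mdpStep isP1 T F X Y π₁) s' s'' ∧
        s'' ∈ X ∪ Y}

lemma lev_mono_n (isP1 : S → Prop) (T : S → A → S) (F : Set S) :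
    ∀ {m n : ℕ}, m ≤ n → lev isP1 T F m ⊆ lev isP1 T F n := by
  intro m n h
  induction h with
  | refl => exact subset_rfl
  | step _ ih => exact ih.trans (fun s hs => Or.inl (Or.inl hs))

lemma lev_mono_F (isP1 : S → Prop) (T : S → A → S) {F F' : Set S} (h : F ⊆ F') :
    ∀ n, lev isP1 T F n ⊆ lev isP1 T F' n := by
  intro n
  induction n with
  | zero => exact h
  | succ n ih =>
    rintro s (((hs | ⟨h1, h2⟩) | ⟨h1, a, h2⟩))
    · exact Or.inl (Or.inl (ih hs))
    · exact Or.inl (Or.inr ⟨h1, fun a => ih (h2 a)⟩)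
    · exact Or.inr ⟨h1, a, ih h2⟩

lemma win2_closed1 [Fintype S] (isP1 : S → Prop) (T : S → A → S) (F : Set S)
    {s : S} (h1 : isP1 s) (h2 : ∀ a, T s a ∈ win2 isP1 T F) :
    s ∈ win2 isP1 T F := by
  have hx : ∀ x : S, ∃ n, x ∈ win2 isP1 T F → x ∈ lev isP1 T F n := by
    intro x
    by_cases hx : x ∈ win2 isP1 T F
    · obtain ⟨n, hn⟩ := Set.mem_iUnion.mp hx
      exact ⟨n, fun _ => hn⟩
    · exact ⟨0, fun h => absurd h hx⟩
  choose f hf using hx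
  set N := Finset.univ.sup f with hN
  refine Set.mem_iUnion.mpr ⟨N + 1, Or.inl (Or.inr ⟨h1, fun a => ?_⟩)⟩
  exact lev_mono_n isP1 T F (Finset.le_sup (Finset.mem_univ _)) (hf _ (h2 a))

lemma win2_closed2 (isP1 : S → Prop) (T : S → A → S) (F : Set S)
    {s : S} (h1 : ¬ isP1 s) {a : A} (h2 : T s a ∈ win2 isP1 T F) :
    s ∈ win2 isP1 T F := by
  obtain ⟨n, hn⟩ := Set.mem_iUnion.mp h2
  exact Set.mem_iUnion.mpr ⟨n + 1, Or.inr ⟨h1, a, hn⟩⟩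

lemma win2_union_eq [Fintype S] (isP1 : S → Prop) (T : S → A → S) (F Z : Set S)
    (hZ : Z ⊆ win2 isP1 T F) :
    win2 isP1 T (F ∪ Z) = win2 isP1 T F := by
  apply Set.Subset.antisymm
  · intro s hs
    obtain ⟨n, hn⟩ := Set.mem_iUnion.mp hs
    clear hs
    induction n generalizing s with
    | zero =>
      rcases hn with h | h
      · exact Set.mem_iUnion.mpr ⟨0, h⟩
      · exact hZ h
    | succ n ih =>
      rcases hn with ((h | ⟨h1, h2⟩) | ⟨h1, a, h2⟩)
      · exact ih h
      · exact win2_closed1 isP1 T F h1 fun a => ih (h2 a)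
      · exact win2_closed2 isP1 T F h1 (ih h2)
  · intro s hs
    obtain ⟨n, hn⟩ := Set.mem_iUnion.mp hs
    exact Set.mem_iUnion.mpr ⟨n, lev_mono_F isP1 T Set.subset_union_left n hn⟩

/-- under the almost-sure winning criterion, placing `Z` as
traps yields exactly the same deceptive winning region as placing `Z` as
fake targets. -/
theorem daswin_traps_eq_fakes [Fintype S]
    (isP1 : S → Prop) (T : S → A → S) (F Z : Set S)
    (hZ : Z ⊆ win2 isP1 T F \ F) :
    daswin isP1 T F Z ∅ = daswin isP1 T F ∅ Z := by
  have hw : win2 isP1 T (F ∪ Z) = win2 isP1 T F :=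
    win2_union_eq isP1 T F Z (fun z hz => (hZ hz).1)
  have hstep : mdpStep isP1 T F Z ∅ = mdpStep isP1 T F ∅ Z := by
    funext π₁ t t'
    simp only [mdpStep, Set.union_empty, Set.empty_union, hw]
  unfold daswin
  rw [hstep]
  simp
end
end

section
/- In the hypergame restricted to subjectively rationalizable greedy actions, every sure winning strategy of player 1 for the reachability objective X ∪ Y yields, in the true game with X ∪ Y as sinks, a strategy guaranteeing that no play starting from a state in P1's hypergame winning region ever visits F. -/
open scoped Classical
noncomputable section

variable {S A : Type*}

/-- Level sets of player 1's attractor of the decoys `X ∪ Y` in the hypergame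
`Ĥ(X,Y)`: player 1 keeps all actions, while player 2 is restricted to its
subjectively rationalizable (rank-reducing with respect to the perceived
target `F ∪ Y`) actions. -/
def dlev (isP1 : S → Prop) (T : S → A → S) (F X Y : Set S) : ℕ → Set S
  | 0 => X ∪ Y
  | n + 1 => dlev isP1 T F X Y n ∪
      {s | isP1 s ∧ ∃ a, T s a ∈ dlev isP1 T F X Y n} ∪
      {s | ¬ isP1 s ∧
        (∃ a, rank isP1 T (F ∪ Y) (T s a) < rank isP1 T (F ∪ Y) s) ∧
        (∀ a, rank isP1 T (F ∪ Y) (T s a) < rank isP1 T (F ∪ Y) s →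
          T s a ∈ dlev isP1 T F X Y n)}

/-- Player 1's stealthy deceptive sure-winning region: attractor of `X ∪ Y`
in the hypergame `Ĥ(X,Y)`. -/
def dswin (isP1 : S → Prop) (T : S → A → S) (F X Y : Set S) : Set S :=
  ⋃ n, dlev isP1 T F X Y n

/-- if P1's strategy `π₁` is sure winning in the hypergame
(every play from P1's hypergame winning region, with P2 restricted to its
greedy, subjectively rationalizable rank-reducing actions w.r.t. `F ∪ Y`,
reaches the decoys `X ∪ Y` in the true game `G_{X,Y}`), then every such play
never visits `F`. -/
theorem hypergame_winning_avoids_F [Fintype S]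
    (isP1 : S → Prop) (T : S → A → S) (F X Y : Set S)
    (hX : X ⊆ win2 isP1 T F \ F) (hY : Y ⊆ win2 isP1 T F \ F)
    (hXY : Disjoint X Y)
    (hF : ∀ s ∈ F, ∀ a, T s a = s)
    (π₁ : S → A)
    (hwin : ∀ s ∈ dswin isP1 T F X Y, ∀ π₂ : S → A,
      (∀ t, ¬ isP1 t → t ∈ win2 isP1 T F → t ∉ F ∪ Y →
        rank isP1 T (F ∪ Y) (T t (π₂ t)) < rank isP1 T (F ∪ Y) t) →
      ∃ n, (fun t => sinkT T (X ∪ Y) t (if isP1 t then π₁ t else π₂ t))^[n] s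
        ∈ X ∪ Y) :
    ∀ s ∈ dswin isP1 T F X Y, ∀ π₂ : S → A,
      (∀ t, ¬ isP1 t → t ∈ win2 isP1 T F → t ∉ F ∪ Y →
        rank isP1 T (F ∪ Y) (T t (π₂ t)) < rank isP1 T (F ∪ Y) t) →
      ∀ n, (fun t => sinkT T (X ∪ Y) t (if isP1 t then π₁ t else π₂ t))^[n] s
        ∉ F := by
  intro s hs π₂ hπ₂ n hFn
  obtain ⟨n₀, hn₀⟩ := hwin s hs π₂ hπ₂
  set f : S → S := fun t => sinkT T (X ∪ Y) t (if isP1 t then π₁ t else π₂ t) with hf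
  have hDF : ∀ t, t ∈ X ∪ Y → t ∉ F := by
    rintro t (ht | ht) htF
    · exact (hX ht).2 htF
    · exact (hY ht).2 htF
  have hFfix : ∀ t ∈ F, f t = t := by
    intro t ht
    have : t ∉ X ∪ Y := fun h => hDF t h ht
    simp only [hf, sinkT, if_neg this]
    exact hF t ht _
  have hFiter : ∀ k, ∀ t ∈ F, f^[k] t = t := by
    intro k
    induction k with
    | zero => intro t ht; simp
    | succ k ih =>
      intro t ht
      rw [Function.iterate_succ_apply, hFfix t ht, ih t ht]
  rcases le_total n n₀ with h | h
  · have heq : f^[n₀ - n + n] s = f^[n] s := by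
      rw [Function.iterate_add_apply]; exact hFiter (n₀ - n) _ hFn
    rw [Nat.sub_add_cancel h] at heq
    exact hDF _ hn₀ (heq ▸ hFn)
  · have hDfix : ∀ t, t ∈ X ∪ Y → f t = t := by
      intro t ht; simp only [hf, sinkT, if_pos ht]
    have hDiter : ∀ k, ∀ t ∈ X ∪ Y, f^[k] t = t := by
      intro k
      induction k with
      | zero => intro t ht; simp
      | succ k ih =>
        intro t ht
        rw [Function.iterate_succ_apply, hDfix t ht, ih t ht]
    have heq : f^[n - n₀ + n₀] s = f^[n₀] s := by
      rw [Function.iterate_add_apply]; exact hDiter (n - n₀) _ hn₀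
    rw [Nat.sub_add_cancel h] at heq
    exact hDF _ (heq ▸ hn₀) hFn
end
end

section
/- (Rank strictly decreases when P2 can reach a fake target) Let Y ⊆ Win_2(G, F) \ F. If from a state s ∈ Win_2(G, F) \ F player 2 has a strategy in G forcing a visit to Y within rank_F(s) − 1 steps, then the rank of s with respect to the target F ∪ Y is strictly smaller than rank_F(s). -/
open scoped Classical
noncomputable section

variable {S A : Type*}

theorem lev_mono_target (isP1 : S → Prop) (T : S → A → S) {F G : Set S}
    (h : F ⊆ G) : ∀ n, lev isP1 T F n ⊆ lev isP1 T G n := by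
  intro n
  induction n with
  | zero => exact h
  | succ n ih =>
    intro s hsmem
    rcases hsmem with (hs | hs) | hs
    · exact Or.inl (Or.inl (ih hs))
    · exact Or.inl (Or.inr ⟨hs.1, fun a => ih (hs.2 a)⟩)
    · exact Or.inr ⟨hs.1, hs.2.imp fun a ha => ih ha⟩

/-- if from `s ∈ Win₂(G,F) \ F` player 2 can force a visit to
the fake targets `Y` within `rank_F(s) − 1` steps (i.e. `s` is in the `k`-th
attractor level of `Y` for some `k < rank_F(s)`), then the rank of `s`
with respect to `F ∪ Y` is strictly smaller than its rank with respect
to `F`. -/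
theorem rank_strictly_decreases [Fintype S]
    (isP1 : S → Prop) (T : S → A → S) (F Y : Set S)
    (hY : Y ⊆ win2 isP1 T F \ F)
    (s : S) (hs : s ∈ win2 isP1 T F \ F)
    (k : ℕ) (hk : s ∈ lev isP1 T Y k) (hlt : (k : ℕ∞) < rank isP1 T F s) :
    rank isP1 T (F ∪ Y) s < rank isP1 T F s := by
  have h1 : rank isP1 T (F ∪ Y) s ≤ (k : ℕ∞) := by
    have hm : s ∈ lev isP1 T (F ∪ Y) k :=
      lev_mono_target isP1 T (Set.subset_union_right) k hk
    exact iInf_le_of_le k (iInf_le_of_le hm le_rfl)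
  exact lt_of_le_of_lt h1 hlt
end
end
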